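/- For every real a > 0, the radial function u(x,y) = -ln[ (r/(2a))·( r^a + r^{-a} ) ], where r = √(x² + y²), is a C² solution of the elliptic Liouville equation u_xx + u_yy + exp(2u) = 0 on the punctured plane ℝ² \ {(0,0)}. -/

import Mathlib

open Real

noncomputable def Fl (a s : ℝ) : ℝ := s ^ ((1+a)/2) + s ^ ((1-a)/2)
noncomputable def Fl1 (a s : ℝ) : ℝ :=
  (1+a)/2 * s ^ ((1+a)/2 - 1) + (1-a)/2 * s ^ ((1-a)/2 - 1)
noncomputable def Fl2 (a s : ℝ) : ℝ :=
  (1+a)/2 * (((1+a)/2 - 1) * s ^ ((1+a)/2 - 2)) + (1-a)/2 * (((1-a)/2 - 1) * s ^ ((1-a)/2 - 2))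
noncomputable def Gf (a s : ℝ) : ℝ := Real.log (2*a) - Real.log (Fl a s)
noncomputable def Gf1 (a s : ℝ) : ℝ := -(Fl1 a s / Fl a s)
noncomputable def Gf2 (a s : ℝ) : ℝ := -((Fl2 a s * Fl a s - Fl1 a s * Fl1 a s) / Fl a s ^ 2)

lemma Fl_pos (a : ℝ) {s : ℝ} (hs : 0 < s) : 0 < Fl a s :=
  add_pos (Real.rpow_pos_of_pos hs _) (Real.rpow_pos_of_pos hs _)

lemma hasDerivAt_Fl (a : ℝ) {s : ℝ} (hs : 0 < s) : HasDerivAt (Fl a) (Fl1 a s) s := by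
  unfold Fl Fl1
  exact (Real.hasDerivAt_rpow_const (Or.inl hs.ne')).add
    (Real.hasDerivAt_rpow_const (Or.inl hs.ne'))

lemma hasDerivAt_Fl1 (a : ℝ) {s : ℝ} (hs : 0 < s) : HasDerivAt (Fl1 a) (Fl2 a s) s := by
  unfold Fl1 Fl2
  have e1 : (1+a)/2 - 1 - 1 = (1+a)/2 - 2 := by ring
  have e2 : (1-a)/2 - 1 - 1 = (1-a)/2 - 2 := by ring
  have h1 := (Real.hasDerivAt_rpow_const (x := s) (p := (1+a)/2 - 1) (Or.inl hs.ne')).const_mul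
    ((1+a)/2)
  have h2 := (Real.hasDerivAt_rpow_const (x := s) (p := (1-a)/2 - 1) (Or.inl hs.ne')).const_mul
    ((1-a)/2)
  rw [e1] at h1; rw [e2] at h2
  exact h1.add h2

lemma hasDerivAt_Gf (a : ℝ) {s : ℝ} (hs : 0 < s) : HasDerivAt (Gf a) (Gf1 a s) s := by
  unfold Gf Gf1
  exact ((hasDerivAt_Fl a hs).log (Fl_pos a hs).ne').const_sub _

lemma hasDerivAt_Gf1 (a : ℝ) {s : ℝ} (hs : 0 < s) : HasDerivAt (Gf1 a) (Gf2 a s) s := by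
  unfold Gf1 Gf2
  exact ((hasDerivAt_Fl1 a hs).div (hasDerivAt_Fl a hs) (Fl_pos a hs).ne').neg

lemma main_id (a s : ℝ) (hs : 0 < s) :
    4 * Gf1 a s + 4 * s * Gf2 a s + (2*a)^2 / Fl a s ^ 2 = 0 := by
  have e1 : s ^ ((1+a)/2 - 1) = s ^ ((1+a)/2) / s := by
    rw [Real.rpow_sub hs, Real.rpow_one]
  have e2 : s ^ ((1-a)/2 - 1) = s ^ ((1-a)/2) / s := by
    rw [Real.rpow_sub hs, Real.rpow_one]
  have e3 : s ^ ((1+a)/2 - 2) = s ^ ((1+a)/2) / s^2 := by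
    rw [show ((1+a)/2 - 2 : ℝ) = (1+a)/2 - ((2:ℕ):ℝ) by norm_num, Real.rpow_sub hs,
      Real.rpow_natCast]
  have e4 : s ^ ((1-a)/2 - 2) = s ^ ((1-a)/2) / s^2 := by
    rw [show ((1-a)/2 - 2 : ℝ) = (1-a)/2 - ((2:ℕ):ℝ) by norm_num, Real.rpow_sub hs,
      Real.rpow_natCast]
  have hA : 0 < s ^ ((1+a)/2) := Real.rpow_pos_of_pos hs _
  have hB : 0 < s ^ ((1-a)/2) := Real.rpow_pos_of_pos hs _
  have hAB : s ^ ((1+a)/2) * s ^ ((1-a)/2) = s := by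
    rw [← Real.rpow_add hs, show ((1+a)/2 + (1-a)/2 : ℝ) = 1 by ring, Real.rpow_one]
  unfold Gf1 Gf2 Fl Fl1 Fl2
  rw [e1, e2, e3, e4]
  set A := s ^ ((1+a)/2) with hAdef
  set B := s ^ ((1-a)/2) with hBdef
  rw [← hAB]
  have hABpos : (0:ℝ) < A + B := add_pos hA hB
  field_simp
  ring

lemma exp_twoG (a s : ℝ) (ha : 0 < a) (hs : 0 < s) :
    Real.exp (2 * Gf a s) = (2*a)^2 / Fl a s ^ 2 := by
  have hF := Fl_pos a hs
  unfold Gf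
  rw [show 2*(Real.log (2*a) - Real.log (Fl a s))
      = (Real.log (2*a) + Real.log (2*a)) - (Real.log (Fl a s) + Real.log (Fl a s)) by ring,
    Real.exp_sub, Real.exp_add, Real.exp_add, Real.exp_log (by positivity), Real.exp_log hF]
  ring

lemma u_eq_G (a x y : ℝ) (ha : 0 < a) (h : 0 < x ^ 2 + y ^ 2) :
    -Real.log (Real.sqrt (x ^ 2 + y ^ 2) / (2 * a) *
      (Real.sqrt (x ^ 2 + y ^ 2) ^ a + Real.sqrt (x ^ 2 + y ^ 2) ^ (-a)))
    = Gf a (x ^ 2 + y ^ 2) := by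
  set s := x^2+y^2 with hsdef
  have hs : 0 < s := h
  have hX : Real.sqrt s / (2*a) * (Real.sqrt s ^ a + Real.sqrt s ^ (-a))
      = Fl a s / (2*a) := by
    rw [Real.sqrt_eq_rpow, ← Real.rpow_mul hs.le, ← Real.rpow_mul hs.le]
    rw [div_mul_eq_mul_div, mul_add, ← Real.rpow_add hs, ← Real.rpow_add hs]
    rw [show (1/2 + 1/2*a : ℝ) = (1+a)/2 by ring, show (1/2 + 1/2*(-a) : ℝ) = (1-a)/2 by ring]
    rfl
  rw [hX, Real.log_div (Fl_pos a hs).ne' (by positivity)]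
  unfold Gf
  ring

lemma deriv2_aux (a c : ℝ) (f : ℝ → ℝ) (hf : ∀ t, 0 < t^2 + c → f t = Gf a (t^2+c))
    (x : ℝ) (hx : 0 < x^2 + c) :
    deriv (deriv f) x = (Gf2 a (x^2+c) * (2*x))*(2*x) + Gf1 a (x^2+c)*2 := by
  have hop : IsOpen {t : ℝ | 0 < t^2 + c} :=
    isOpen_lt continuous_const (by continuity)
  have hinner : ∀ t : ℝ, HasDerivAt (fun z : ℝ => z^2 + c) (2*t) t := by
    intro t
    simpa using (hasDerivAt_pow 2 t).add_const c
  have h1 : ∀ t ∈ {t : ℝ | 0 < t^2 + c}, HasDerivAt f (Gf1 a (t^2+c) * (2*t)) t := by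
    intro t ht
    have hG := (hasDerivAt_Gf a ht).comp t (hinner t)
    exact hG.congr_of_eventuallyEq
      (Filter.eventuallyEq_of_mem (hop.mem_nhds ht) fun z hz => hf z hz)
  have h2 : deriv f =ᶠ[nhds x] fun t => Gf1 a (t^2+c) * (2*t) :=
    Filter.eventuallyEq_of_mem (hop.mem_nhds hx) fun t ht => (h1 t ht).deriv
  have h3 : HasDerivAt (fun t => Gf1 a (t^2+c) * (2*t))
      ((Gf2 a (x^2+c) * (2*x))*(2*x) + Gf1 a (x^2+c)*2) x := by
    have hc := (hasDerivAt_Gf1 a hx).comp x (hinner x)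
    have hd : HasDerivAt (fun t : ℝ => 2*t) 2 x := by
      simpa using (hasDerivAt_id x).const_mul 2
    exact hc.mul hd
  exact (h3.congr_of_eventuallyEq h2).deriv

/-- For every real `a > 0`, the radial function
`u(x,y) = -ln[ (r/(2a))·( r^a + r^{-a} ) ]`, `r = √(x² + y²)`, is a C² solution of the
elliptic Liouville equation `u_xx + u_yy + exp(2u) = 0` on the punctured plane ℝ² \ {0}. -/
theorem radial_solves_liouville (a : ℝ) (ha : 0 < a) :
    let u : ℝ → ℝ → ℝ := fun x y =>
      -Real.log (Real.sqrt (x ^ 2 + y ^ 2) / (2 * a) *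
        (Real.sqrt (x ^ 2 + y ^ 2) ^ a + Real.sqrt (x ^ 2 + y ^ 2) ^ (-a)))
    (ContDiffOn ℝ 2 (fun p : ℝ × ℝ => u p.1 p.2) {p : ℝ × ℝ | p ≠ (0, 0)}) ∧
    (∀ x y : ℝ, (x, y) ≠ ((0 : ℝ), (0 : ℝ)) →
      deriv (deriv (fun x' : ℝ => u x' y)) x
        + deriv (deriv (fun y' : ℝ => u x y')) y
        + Real.exp (2 * u x y) = 0) := by
  intro u
  have hpos : ∀ x y : ℝ, (x, y) ≠ ((0:ℝ), (0:ℝ)) → 0 < x^2 + y^2 := by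
    intro x y hxy
    rcases (not_and_or.mp (by simpa [Prod.ext_iff] using hxy)) with h | h
    · have : 0 < x^2 := by positivity
      nlinarith [sq_nonneg y]
    · have : 0 < y^2 := by positivity
      nlinarith [sq_nonneg x]
  have hu : ∀ x y : ℝ, 0 < x^2 + y^2 → u x y = Gf a (x^2 + y^2) :=
    fun x y h => u_eq_G a x y ha h
  constructor
  · intro z hz
    have hzpos : 0 < z.1^2 + z.2^2 := hpos z.1 z.2 (by simpa [Prod.ext_iff] using hz)
    apply ContDiffAt.contDiffWithinAt
    have hop : IsOpen {w : ℝ × ℝ | 0 < w.1^2 + w.2^2} :=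
      isOpen_lt continuous_const (by continuity)
    have hG : ContDiffAt ℝ 2 (fun w : ℝ × ℝ => Gf a (w.1^2 + w.2^2)) z := by
      have hinner : ContDiffAt ℝ 2 (fun w : ℝ × ℝ => w.1^2 + w.2^2) z := by
        apply ContDiff.contDiffAt; fun_prop
      have hGat : ContDiffAt ℝ 2 (Gf a) (z.1^2 + z.2^2) := by
        unfold Gf Fl
        apply ContDiffAt.sub contDiffAt_const
        apply ContDiffAt.log
        · exact (Real.contDiffAt_rpow_const_of_ne hzpos.ne').add
            (Real.contDiffAt_rpow_const_of_ne hzpos.ne')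
        · exact (Fl_pos a hzpos).ne'
      exact ContDiffAt.comp (g := Gf a) (f := fun w : ℝ × ℝ => w.1^2 + w.2^2) z hGat hinner
    exact hG.congr_of_eventuallyEq
      (Filter.eventuallyEq_of_mem (hop.mem_nhds hzpos)
        fun w hw => hu w.1 w.2 hw)
  · intro x y hxy
    have hs : 0 < x^2 + y^2 := hpos x y hxy
    have h1 : deriv (deriv (fun x' : ℝ => u x' y)) x
        = (Gf2 a (x^2+y^2) * (2*x))*(2*x) + Gf1 a (x^2+y^2)*2 :=
      deriv2_aux a (y^2) (fun t => u t y) (fun t ht => hu t y ht) x hs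
    have h2 : deriv (deriv (fun y' : ℝ => u x y')) y
        = (Gf2 a (y^2+x^2) * (2*y))*(2*y) + Gf1 a (y^2+x^2)*2 :=
      deriv2_aux a (x^2) (fun t => u x t)
        (fun t ht => by show u x t = _; rw [hu x t (by linarith), add_comm (x^2)]) y (by linarith)
    rw [add_comm (y^2)] at h2
    rw [h1, h2, hu x y hs, exp_twoG a _ ha hs]
    linear_combination main_id a (x^2+y^2) hs
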